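/- Fix a set A of nonnegative integers with |A| ≥ 2, with m = max(A) and m' = max(A \ {m}). For each integer b ≥ m, let Y_b be a random variable with P(Y_b = i) = C(b,i)/Σ_{t∈A} C(b,t) for i ∈ A. Then there exist constants c_1, c_2 > 0 and an integer b_0 such that for all b ≥ b_0, c_1·b^{m'−m} ≤ Var(Y_b) ≤ c_2·b^{m'−m}. -/

import Mathlib

open MeasureTheory ProbabilityTheory

private lemma choose_mono_half {b : ℕ} : ∀ j, j ≤ b / 2 → ∀ i, i ≤ j → b.choose i ≤ b.choose j := by
  intro j
  induction j with
  | zero => intro _ i hi; simp [Nat.le_zero.mp hi]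
  | succ j ih =>
    intro hj i hi
    rcases Nat.eq_or_lt_of_le hi with h | h
    · rw [h]
    · exact le_trans (ih (le_trans (Nat.le_succ j) hj) i (Nat.lt_succ_iff.mp h))
        (Nat.choose_le_succ_of_lt_half_left (Nat.lt_of_lt_of_le (Nat.lt_succ_self j) hj))

private lemma sum_identity (A : Finset ℕ) (C : ℕ → ℝ) :
    ∑ i ∈ A, ∑ j ∈ A, C i * C j * ((i : ℝ) - (j : ℝ)) ^ 2
      = 2 * ((∑ i ∈ A, (i : ℝ) ^ 2 * C i) * (∑ i ∈ A, C i)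
          - (∑ i ∈ A, (i : ℝ) * C i) ^ 2) := by
  have h : ∀ i ∈ A, ∑ j ∈ A, C i * C j * ((i : ℝ) - (j : ℝ)) ^ 2
      = ((i : ℝ) ^ 2 * C i) * (∑ j ∈ A, C j)
        - 2 * (((i : ℝ) * C i) * (∑ j ∈ A, (j : ℝ) * C j))
        + C i * (∑ j ∈ A, (j : ℝ) ^ 2 * C j) := by
    intro i _
    simp only [Finset.mul_sum]
    rw [← Finset.sum_sub_distrib, ← Finset.sum_add_distrib]
    exact Finset.sum_congr rfl fun j _ => by ring
  rw [Finset.sum_congr rfl h]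
  simp only [Finset.sum_add_distrib, Finset.sum_sub_distrib, ← Finset.sum_mul, ← Finset.mul_sum]
  ring

set_option maxHeartbeats 1000000 in
/-- Asymptotics of the variance of the number of summands from a bin of size `b` with
allowed counts `A` (`|A| ≥ 2`, `m = max A`, `m' = max (A \ {m})`): as `b → ∞`,
`Var(Y_b) = Θ(b^{m'−m})`. -/
theorem variance_asymptotics (A : Finset ℕ) (hcard : 2 ≤ A.card)
    (m m' : ℕ) (hm : IsGreatest (A : Set ℕ) m)
    (hm' : IsGreatest ((A.erase m : Finset ℕ) : Set ℕ) m')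
    (Ω : ℕ → Type*) [∀ b, MeasureSpace (Ω b)]
    [∀ b, IsProbabilityMeasure (ℙ : Measure (Ω b))]
    (Y : ∀ b, Ω b → ℝ) (hY : ∀ b, Measurable (Y b))
    (hP : ∀ b, m ≤ b → ∀ i ∈ A, ℙ {ω | Y b ω = (i : ℝ)} =
      ENNReal.ofReal ((b.choose i : ℝ) / ∑ t ∈ A, (b.choose t : ℝ))) :
    ∃ c₁ c₂ : ℝ, 0 < c₁ ∧ 0 < c₂ ∧ ∃ b₀ : ℕ, ∀ b : ℕ, b₀ ≤ b → m ≤ b →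
      c₁ * (b : ℝ) ^ ((m' : ℤ) - (m : ℤ)) ≤ variance (Y b) ℙ ∧
        variance (Y b) ℙ ≤ c₂ * (b : ℝ) ^ ((m' : ℤ) - (m : ℤ)) := by
  -- basic facts about m, m'
  have hmA : m ∈ A := hm.1
  have hm'Am : m' ∈ A.erase m := hm'.1
  have hm'A : m' ∈ A := Finset.mem_of_mem_erase hm'Am
  have hm'ne : m' ≠ m := Finset.ne_of_mem_erase hm'Am
  have hm'lt : m' < m := lt_of_le_of_ne (hm.2 hm'A) hm'ne
  have hm1 : 1 ≤ m := by omega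
  have hcard_pos : (0 : ℝ) < (A.card : ℝ) := by
    have h0 : 0 < A.card := by omega
    exact_mod_cast h0
  have hd_pos : (0 : ℝ) < (m : ℝ) - (m' : ℝ) := by
    have h0 : (m' : ℝ) < (m : ℝ) := by exact_mod_cast hm'lt
    linarith
  have hmfac : (0 : ℝ) < (m.factorial : ℝ) := by exact_mod_cast m.factorial_pos
  have hm'fac : (0 : ℝ) < (m'.factorial : ℝ) := by exact_mod_cast m'.factorial_pos
  refine ⟨((m : ℝ) - m') ^ 2 / (2 * (A.card : ℝ) ^ 2 * 2 ^ m' * (m'.factorial : ℝ)),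
    (A.card : ℝ) ^ 2 * (m : ℝ) ^ 2 * 2 ^ m * (m.factorial : ℝ) / 2, by positivity, by positivity,
    2 * m, ?_⟩
  intro b hb2 hbm
  -- notation
  have hC_nonneg : ∀ i, (0:ℝ) ≤ (b.choose i : ℝ) := fun i => by positivity
  set C : ℕ → ℝ := fun i => (b.choose i : ℝ) with hC
  set S : ℝ := ∑ t ∈ A, C t with hSdef
  have hCm_pos : 0 < C m := by
    simp only [hC]
    exact_mod_cast Nat.choose_pos hbm
  have hCm'_pos : 0 < C m' := by
    simp only [hC]
    exact_mod_cast Nat.choose_pos (le_trans (le_of_lt hm'lt) hbm)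
  have hS_low : C m ≤ S := Finset.single_le_sum (fun t _ => hC_nonneg t) hmA
  have hS_pos : 0 < S := lt_of_lt_of_le hCm_pos hS_low
  have hb_pos : (0 : ℝ) < (b : ℝ) := by
    have h0 : 0 < b := by omega
    exact_mod_cast h0
  have hmhalf : m ≤ b / 2 := (Nat.le_div_iff_mul_le (by norm_num)).mpr (by omega)
  -- the distribution
  set p : ℕ → ℝ := fun i => C i / S with hpdef
  have hp_nonneg : ∀ i, 0 ≤ p i := fun i => div_nonneg (hC_nonneg i) hS_pos.le
  have hp_sum : ∑ i ∈ A, p i = 1 := by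
    simp only [hpdef]
    rw [← Finset.sum_div, ← hSdef, div_self hS_pos.ne']
  set E : ℕ → Set (Ω b) := fun i => {ω | Y b ω = (i : ℝ)} with hEdef
  have hE_meas : ∀ i, MeasurableSet (E i) := fun i => hY b (measurableSet_singleton _)
  have hPE : ∀ i ∈ A, ℙ (E i) = ENNReal.ofReal (p i) := fun i hi => hP b hbm i hi
  have hE_disj : (A : Set ℕ).PairwiseDisjoint E := by
    intro i _ j _ hij
    simp only [Function.onFun, Set.disjoint_left]
    intro ω hi hj
    have h1 : Y b ω = (i : ℝ) := hi
    have h2 : Y b ω = (j : ℝ) := hj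
    have h3 : (i : ℝ) = (j : ℝ) := by rw [← h1, h2]
    exact hij (by exact_mod_cast h3)
  have hU : ℙ (⋃ i ∈ A, E i) = 1 := by
    rw [measure_biUnion_finset hE_disj (fun i _ => hE_meas i), Finset.sum_congr rfl hPE,
      ← ENNReal.ofReal_sum_of_nonneg (fun i _ => hp_nonneg i), hp_sum, ENNReal.ofReal_one]
  have hae : ∀ᵐ ω ∂(ℙ : Measure (Ω b)), ω ∈ ⋃ i ∈ A, E i := by
    rw [ae_iff]
    have hcompl : {ω | ¬ ω ∈ ⋃ i ∈ A, E i} = (⋃ i ∈ A, E i)ᶜ := rfl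
    rw [hcompl]
    exact (prob_compl_eq_zero_iff
      (MeasurableSet.biUnion A.countable_toSet (fun i _ => hE_meas i))).mpr hU
  -- moments
  have hint : ∀ f : ℝ → ℝ, ∫ ω, f (Y b ω) = ∑ i ∈ A, f i * p i := by
    intro f
    have heq : (fun ω => f (Y b ω)) =ᵐ[(ℙ : Measure (Ω b))]
        fun ω => ∑ i ∈ A, Set.indicator (E i) (fun _ => f i) ω := by
      filter_upwards [hae] with ω hω
      simp only [Set.mem_iUnion] at hω
      obtain ⟨i₀, hi₀A, hi₀⟩ := hω
      have hY0 : Y b ω = (i₀ : ℝ) := hi₀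
      rw [Finset.sum_eq_single i₀]
      · rw [Set.indicator_of_mem hi₀, hY0]
      · intro j hj hne
        apply Set.indicator_of_notMem
        intro hωj
        have h1 : Y b ω = (j : ℝ) := hωj
        have h2 : (j : ℝ) = (i₀ : ℝ) := by rw [← h1, hY0]
        exact hne (by exact_mod_cast h2)
      · intro h; exact absurd hi₀A h
    rw [integral_congr_ae heq, integral_finset_sum]
    · refine Finset.sum_congr rfl fun i hi => ?_
      rw [integral_indicator_const (f i) (hE_meas i), measureReal_def, hPE i hi, smul_eq_mul,
        ENNReal.toReal_ofReal (hp_nonneg i), mul_comm]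
    · exact fun i _ => (integrable_const (f i)).indicator (hE_meas i)
  have hmem : MemLp (Y b) 2 (ℙ : Measure (Ω b)) := by
    apply MemLp.of_bound (hY b).aestronglyMeasurable (m : ℝ)
    filter_upwards [hae] with ω hω
    simp only [Set.mem_iUnion] at hω
    obtain ⟨i, hiA, hi⟩ := hω
    have hY0 : Y b ω = (i : ℝ) := hi
    rw [Real.norm_eq_abs, hY0, abs_of_nonneg (by positivity)]
    exact_mod_cast hm.2 hiA
  set Q : ℝ := ∑ i ∈ A, (i : ℝ) ^ 2 * C i with hQdef
  set P : ℝ := ∑ i ∈ A, (i : ℝ) * C i with hPdef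
  set N : ℝ := ∑ i ∈ A, ∑ j ∈ A, C i * C j * ((i : ℝ) - (j : ℝ)) ^ 2 with hNdef
  have hvar : variance (Y b) ℙ = N / (2 * S ^ 2) := by
    rw [variance_eq_sub hmem]
    have h2 : ∫ ω, ((Y b) ^ 2) ω = ∑ i ∈ A, (i : ℝ) ^ 2 * p i := by
      rw [show (fun ω => ((Y b) ^ 2) ω) = fun ω => (fun x : ℝ => x ^ 2) (Y b ω) from rfl]
      exact hint (fun x => x ^ 2)
    have h1 : ∫ ω, Y b ω = ∑ i ∈ A, (i : ℝ) * p i := by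
      exact hint (fun x => x)
    have hE2 : ∑ i ∈ A, (i : ℝ) ^ 2 * p i = Q / S := by
      rw [hQdef, Finset.sum_div]
      exact Finset.sum_congr rfl fun i _ => by simp only [hpdef]; rw [mul_div_assoc]
    have hE1 : ∑ i ∈ A, (i : ℝ) * p i = P / S := by
      rw [hPdef, Finset.sum_div]
      exact Finset.sum_congr rfl fun i _ => by simp only [hpdef]; rw [mul_div_assoc]
    have hNid : N = 2 * (Q * S - P ^ 2) := sum_identity A C
    have hgoal : ∫ ω, ((Y b) ^ 2) ω ∂ℙ - (∫ ω, Y b ω ∂ℙ) ^ 2 = N / (2 * S ^ 2) := by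
      rw [h2, h1, hE2, hE1, hNid]
      field_simp
    exact hgoal
  -- bounds on N and S
  have hterm_nonneg : ∀ q : ℕ × ℕ, 0 ≤ C q.1 * C q.2 * ((q.1 : ℝ) - (q.2 : ℝ)) ^ 2 := by
    intro q
    have h1 := hC_nonneg q.1
    have h2 := hC_nonneg q.2
    positivity
  have hNprod : N = ∑ q ∈ A ×ˢ A, C q.1 * C q.2 * ((q.1 : ℝ) - (q.2 : ℝ)) ^ 2 := by
    rw [hNdef, Finset.sum_product]
  have hN_nonneg : 0 ≤ N := by
    rw [hNprod]
    exact Finset.sum_nonneg fun q _ => hterm_nonneg q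
  have hN_low : C m * C m' * ((m : ℝ) - (m' : ℝ)) ^ 2 ≤ N := by
    rw [hNprod]
    exact Finset.single_le_sum (f := fun q : ℕ × ℕ => C q.1 * C q.2 * ((q.1 : ℝ) - (q.2 : ℝ)) ^ 2)
      (fun q _ => hterm_nonneg q)
      (show ((m, m') : ℕ × ℕ) ∈ A ×ˢ A from Finset.mem_product.mpr ⟨hmA, hm'A⟩)
  have hCC : ∀ i ∈ A, ∀ j ∈ A, i ≠ j → C i * C j ≤ C m * C m' := by
    have key : ∀ i ∈ A, ∀ j ∈ A, i < j → b.choose i * b.choose j ≤ b.choose m * b.choose m' := by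
      intro i hi j hj hlt
      have hjm : j ≤ m := hm.2 hj
      have him' : i ≤ m' := hm'.2 (Finset.mem_erase.mpr ⟨by omega, hi⟩)
      have h1 : b.choose i ≤ b.choose m' := choose_mono_half m' (by omega) i him'
      have h2 : b.choose j ≤ b.choose m := choose_mono_half m hmhalf j hjm
      calc b.choose i * b.choose j ≤ b.choose m' * b.choose m := Nat.mul_le_mul h1 h2
        _ = b.choose m * b.choose m' := Nat.mul_comm _ _
    intro i hi j hj hij
    simp only [hC]
    rcases Nat.lt_or_ge i j with hlt | hge
    · exact_mod_cast key i hi j hj hlt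
    · have hlt : j < i := by omega
      have h0 := key j hj i hi hlt
      calc ((b.choose i : ℝ)) * (b.choose j : ℝ) = (b.choose j : ℝ) * (b.choose i : ℝ) :=
            mul_comm _ _
        _ ≤ (b.choose m : ℝ) * (b.choose m' : ℝ) := by exact_mod_cast h0
  have hN_high : N ≤ (A.card : ℝ) ^ 2 * ((m : ℝ) ^ 2 * (C m * C m')) := by
    rw [hNprod]
    calc ∑ q ∈ A ×ˢ A, C q.1 * C q.2 * ((q.1 : ℝ) - (q.2 : ℝ)) ^ 2
        ≤ (A ×ˢ A).card • ((m : ℝ) ^ 2 * (C m * C m')) := by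
          apply Finset.sum_le_card_nsmul
          intro q hq
          obtain ⟨hq1, hq2⟩ := Finset.mem_product.mp hq
          by_cases hij : q.1 = q.2
          · rw [hij, sub_self]
            have h1 : (0:ℝ) ≤ (m : ℝ) ^ 2 * (C m * C m') := by positivity
            simpa using h1
          · have hsq : ((q.1 : ℝ) - (q.2 : ℝ)) ^ 2 ≤ (m : ℝ) ^ 2 := by
              have h1 : (q.1 : ℝ) ≤ (m : ℝ) := by exact_mod_cast hm.2 hq1
              have h2 : (q.2 : ℝ) ≤ (m : ℝ) := by exact_mod_cast hm.2 hq2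
              have h3 : (0 : ℝ) ≤ (q.1 : ℝ) := by positivity
              have h4 : (0 : ℝ) ≤ (q.2 : ℝ) := by positivity
              apply sq_le_sq' (by linarith) (by linarith)
            calc C q.1 * C q.2 * ((q.1 : ℝ) - (q.2 : ℝ)) ^ 2
                ≤ (C m * C m') * (m : ℝ) ^ 2 := by
                  apply mul_le_mul (hCC q.1 hq1 q.2 hq2 hij) hsq (sq_nonneg _) (by positivity)
              _ = (m : ℝ) ^ 2 * (C m * C m') := by ring
      _ = (A.card : ℝ) ^ 2 * ((m : ℝ) ^ 2 * (C m * C m')) := by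
          rw [Finset.card_product, nsmul_eq_mul]
          push_cast
          ring
  have hS_high : S ≤ (A.card : ℝ) * C m := by
    calc S ≤ A.card • C m := by
          apply Finset.sum_le_card_nsmul
          intro t ht
          have h0 : b.choose t ≤ b.choose m := choose_mono_half m hmhalf t (hm.2 ht)
          simp only [hC]
          exact_mod_cast h0
      _ = (A.card : ℝ) * C m := nsmul_eq_mul _ _
  -- choose ratio bounds
  have hz : (b : ℝ) ^ ((m' : ℤ) - (m : ℤ)) = (b : ℝ) ^ m' / (b : ℝ) ^ m := by
    rw [zpow_sub₀ hb_pos.ne', zpow_natCast, zpow_natCast]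
  have hlowpow : ∀ k : ℕ, k ≤ m → (b : ℝ) ^ k / (2 ^ k * (k.factorial : ℝ)) ≤ C k := by
    intro k hk
    have hkb : k ≤ b + 1 := by omega
    have hcast : ((b + 1 - k : ℕ) : ℝ) = (b : ℝ) + 1 - (k : ℝ) := by
      push_cast [Nat.cast_sub hkb]
      ring
    have hmb2 : (m : ℝ) * 2 ≤ (b : ℝ) := by
      have h0 : ((2 * m : ℕ) : ℝ) ≤ (b : ℝ) := by exact_mod_cast hb2
      push_cast at h0
      linarith
    have hkm : (k : ℝ) ≤ (m : ℝ) := by exact_mod_cast hk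
    have hkfac : (0:ℝ) < (k.factorial : ℝ) := by exact_mod_cast k.factorial_pos
    calc (b : ℝ) ^ k / (2 ^ k * (k.factorial : ℝ)) = ((b : ℝ) / 2) ^ k / (k.factorial : ℝ) := by
          rw [div_pow]
          ring
      _ ≤ ((b + 1 - k : ℕ) : ℝ) ^ k / (k.factorial : ℝ) := by
          gcongr <;> first
            | positivity
            | (rw [hcast]; linarith)
      _ ≤ C k := by
          simp only [hC]
          exact Nat.pow_le_choose (α := ℝ) k b
  have hCm_le : C m ≤ (b : ℝ) ^ m := by
    simp only [hC]
    exact_mod_cast Nat.choose_le_pow b m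
  have hCm'_le : C m' ≤ (b : ℝ) ^ m' := by
    simp only [hC]
    exact_mod_cast Nat.choose_le_pow b m'
  have hratio_low : (b : ℝ) ^ ((m' : ℤ) - (m : ℤ)) / (2 ^ m' * (m'.factorial : ℝ))
      ≤ C m' / C m := by
    rw [hz, div_right_comm]
    exact div_le_div₀ hCm'_pos.le (hlowpow m' hm'lt.le) hCm_pos hCm_le
  have hratio_high : C m' / C m
      ≤ 2 ^ m * (m.factorial : ℝ) * (b : ℝ) ^ ((m' : ℤ) - (m : ℤ)) := by
    rw [hz]
    calc C m' / C m ≤ (b : ℝ) ^ m' / ((b : ℝ) ^ m / (2 ^ m * (m.factorial : ℝ))) :=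
          div_le_div₀ (by positivity) hCm'_le (by positivity) (hlowpow m le_rfl)
      _ = 2 ^ m * (m.factorial : ℝ) * ((b : ℝ) ^ m' / (b : ℝ) ^ m) := by
          field_simp
  constructor
  · -- lower bound
    rw [hvar]
    calc ((m : ℝ) - m') ^ 2 / (2 * (A.card : ℝ) ^ 2 * 2 ^ m' * (m'.factorial : ℝ))
          * (b : ℝ) ^ ((m' : ℤ) - (m : ℤ))
        = ((m : ℝ) - m') ^ 2 / (2 * (A.card : ℝ) ^ 2)
            * ((b : ℝ) ^ ((m' : ℤ) - (m : ℤ)) / (2 ^ m' * (m'.factorial : ℝ))) := by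
          ring
      _ ≤ ((m : ℝ) - m') ^ 2 / (2 * (A.card : ℝ) ^ 2) * (C m' / C m) :=
          mul_le_mul_of_nonneg_left hratio_low (by positivity)
      _ = (C m * C m' * ((m : ℝ) - (m' : ℝ)) ^ 2) / (2 * ((A.card : ℝ) * C m) ^ 2) := by
          field_simp
      _ ≤ N / (2 * S ^ 2) := by
          apply div_le_div₀ hN_nonneg hN_low (by positivity)
          have h0 : S ^ 2 ≤ ((A.card : ℝ) * C m) ^ 2 := by
            apply pow_le_pow_left₀ hS_pos.le hS_high
          linarith
  · -- upper bound
    rw [hvar]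
    calc N / (2 * S ^ 2)
        ≤ ((A.card : ℝ) ^ 2 * ((m : ℝ) ^ 2 * (C m * C m'))) / (2 * C m ^ 2) := by
          apply div_le_div₀ (by positivity) hN_high (by positivity)
          have h0 : C m ^ 2 ≤ S ^ 2 := pow_le_pow_left₀ hCm_pos.le hS_low 2
          linarith
      _ = ((A.card : ℝ) ^ 2 * (m : ℝ) ^ 2 / 2) * (C m' / C m) := by
          field_simp
      _ ≤ ((A.card : ℝ) ^ 2 * (m : ℝ) ^ 2 / 2)
            * (2 ^ m * (m.factorial : ℝ) * (b : ℝ) ^ ((m' : ℤ) - (m : ℤ))) :=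
          mul_le_mul_of_nonneg_left hratio_high (by positivity)
      _ = (A.card : ℝ) ^ 2 * (m : ℝ) ^ 2 * 2 ^ m * (m.factorial : ℝ) / 2
            * (b : ℝ) ^ ((m' : ℤ) - (m : ℤ)) := by
          ring
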